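/- Let g be a finite-dimensional real solvable Lie algebra whose nilradical n is isomorphic to the standard filiform Lie algebra L_l with l ≥ 4. Then dim g ≤ l + 2; that is, the codimension of the nilradical in g is at most 2. -/

import Mathlib

open scoped BigOperators

/-- `B` is an inner product on `g`: a symmetric, positive-definite bilinear form. -/
def IsInnerProduct {g : Type*} [AddCommGroup g] [Module ℝ g]
    (B : LinearMap.BilinForm ℝ g) : Prop :=
  (∀ x y : g, B x y = B y x) ∧ (∀ x : g, x ≠ 0 → 0 < B x x)

/-- The basis `E` is orthonormal with respect to the bilinear form `B`. -/
def IsOrthonormalBasis {g : Type*} [AddCommGroup g] [Module ℝ g] {ι : Type*}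
    (B : LinearMap.BilinForm ℝ g) (E : Module.Basis ι ℝ g) : Prop :=
  (∀ i, B (E i) (E i) = 1) ∧ ∀ i j, i ≠ j → B (E i) (E j) = 0

/-- `H` is the mean curvature vector of `(g, B)`: `⟨H, X⟩ = Tr (ad X)` for all `X`. -/
def IsMeanCurvature {g : Type*} [LieRing g] [LieAlgebra ℝ g]
    (B : LinearMap.BilinForm ℝ g) (H : g) : Prop :=
  ∀ X : g, B H X = LinearMap.trace ℝ g (LieAlgebra.ad ℝ g X)

/-- The Ricci form of the metric Lie algebra `(g, B)`. -/
noncomputable def ricForm {g : Type*} [LieRing g] [LieAlgebra ℝ g] {ι : Type*} [Fintype ι]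
    (B : LinearMap.BilinForm ℝ g) (E : Module.Basis ι ℝ g) (H : g) (X : g) : ℝ :=
  - B ⁅H, X⁆ X - (1/2) * (killingForm ℝ g) X X
    - (1/2) * ∑ i, B ⁅X, E i⁆ ⁅X, E i⁆
    + (1/4) * ∑ i, ∑ j, (B ⁅E i, E j⁆ X)^2

/-- `g` admits an inner product of (strictly) negative Ricci curvature. -/
def HasNegRicci (g : Type*) [LieRing g] [LieAlgebra ℝ g] : Prop :=
  ∃ B : LinearMap.BilinForm ℝ g, IsInnerProduct B ∧
    ∀ {ι : Type} [Fintype ι] (E : Module.Basis ι ℝ g), IsOrthonormalBasis B E →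
      ∀ H : g, IsMeanCurvature B H →
        ∀ X : g, X ≠ 0 → ricForm B E H X < 0

/-- `n` is the nilradical of `g`: a nilpotent Lie ideal containing every nilpotent Lie ideal. -/
def IsNilradical {g : Type*} [LieRing g] [LieAlgebra ℝ g] (n : LieIdeal ℝ g) : Prop :=
  LieRing.IsNilpotent n ∧ ∀ m : LieIdeal ℝ g, LieRing.IsNilpotent m → m ≤ n

/-- The restriction of `ad Y` to the Lie ideal `n`. -/
def adRestrict {g : Type*} [LieRing g] [LieAlgebra ℝ g] (n : LieIdeal ℝ g) (Y : g) :
    Module.End ℝ n where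
  toFun x := ⟨⁅Y, (x : g)⁆, n.lie_mem x.2⟩
  map_add' x y := by ext; simp
  map_smul' c x := by ext; simp

/-- All eigenvalues of (the complexification of) a real linear operator
have positive real part: every complex root of its characteristic polynomial
has positive real part. -/
def AllEigenvaluesPosRe {V : Type*} [AddCommGroup V] [Module ℝ V]
    [Module.Finite ℝ V] [Module.Free ℝ V] (A : Module.End ℝ V) : Prop :=
  ∀ μ : ℂ, Polynomial.aeval μ (LinearMap.charpoly A) = 0 → 0 < μ.re


/-- If the nilradical of a finite-dimensional real solvable Lie algebra `g`
is the standard filiform Lie algebra `L_l` (`l ≥ 4`), then `dim g ≤ l + 2`: the codimension of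
the nilradical is at most `2`. -/
theorem finrank_le_of_filiform_nilradical
    (g : Type*) [LieRing g] [LieAlgebra ℝ g] [Module.Finite ℝ g]
    [LieAlgebra.IsSolvable g]
    (n : LieIdeal ℝ g) (hn : IsNilradical n)
    (l : ℕ) (hl : 4 ≤ l) (Xb : Fin l → g)
    (hXmem : ∀ i, Xb i ∈ n)
    (hindep : LinearIndependent ℝ Xb)
    (hspan : ∀ x : g, x ∈ n ↔ x ∈ Submodule.span ℝ (Set.range Xb))
    (hbr : ∀ i : Fin l, ∀ hi : (i : ℕ) + 1 < l, 1 ≤ (i : ℕ) →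
      ⁅Xb ⟨0, by omega⟩, Xb i⁆ = Xb ⟨(i : ℕ) + 1, hi⟩)
    (hbrlast : ⁅Xb ⟨0, by omega⟩, Xb ⟨l - 1, by omega⟩⁆ = 0)
    (hab : ∀ i j : Fin l, 1 ≤ (i : ℕ) → 1 ≤ (j : ℕ) → ⁅Xb i, Xb j⁆ = 0) :
    Module.finrank ℝ g ≤ l + 2 := by
  classical
  have h0l : 0 < l := by omega
  have h1l : 1 < l := by omega
  have h2l : 2 < l := by omega
  have h3l : 3 < l := by omega
  -- the flag of submodules spanned by tails of the basis
  set G : ℕ → Submodule ℝ g :=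
    fun k => Submodule.span ℝ (Xb '' {i : Fin l | k ≤ (i : ℕ)}) with hGdef
  have hGmono : ∀ {k k' : ℕ}, k ≤ k' → G k' ≤ G k := by
    intro k k' h
    exact Submodule.span_mono (Set.image_mono fun i hi => le_trans h hi)
  have hXbG : ∀ (i : Fin l) (k : ℕ), k ≤ (i : ℕ) → Xb i ∈ G k := by
    intro i k hk
    exact Submodule.subset_span ⟨i, hk, rfl⟩
  have h00 : Xb '' {i : Fin l | 0 ≤ (i : ℕ)} = Set.range Xb := by
    have : {i : Fin l | 0 ≤ (i : ℕ)} = Set.univ := by ext i; simp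
    rw [this, Set.image_univ]
  have hNG : ∀ x : g, x ∈ n → x ∈ G 0 := by
    intro x hx
    have h1 := (hspan x).1 hx
    simp only [hGdef]
    rwa [h00]
  have hG0n : ∀ x : g, x ∈ G 0 → x ∈ n := by
    intro x hx
    rw [hspan]
    simp only [hGdef] at hx
    rwa [h00] at hx
  have hGl : G l = ⊥ := by
    have hemp : {i : Fin l | l ≤ (i : ℕ)} = (∅ : Set (Fin l)) := by
      ext i
      simp only [Set.mem_setOf_eq, Set.mem_empty_iff_false, iff_false, not_le]
      exact i.isLt
    simp [hGdef, hemp]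
  -- bracketing with X₁ shifts the flag
  have hlie0 : ∀ (k : ℕ) (x : g), x ∈ G k → ⁅Xb ⟨0, h0l⟩, x⁆ ∈ G (k + 1) := by
    intro k x hx
    simp only [hGdef] at hx
    induction hx using Submodule.span_induction with
    | mem z hz =>
      obtain ⟨i, hik, rfl⟩ := hz
      by_cases hi0 : (i : ℕ) = 0
      · have : i = ⟨0, h0l⟩ := Fin.ext hi0
        rw [this, lie_self]
        exact Submodule.zero_mem _
      · by_cases hi1 : (i : ℕ) + 1 < l
        · rw [hbr i hi1 (by omega)]
          exact hXbG _ _ (by simpa using Nat.succ_le_succ hik)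
        · have : i = ⟨l - 1, by omega⟩ := Fin.ext (by have := i.isLt; simp; omega)
          rw [this, hbrlast]
          exact Submodule.zero_mem _
    | zero => rw [lie_zero]; exact Submodule.zero_mem _
    | add x y hx hy ihx ihy => rw [lie_add]; exact Submodule.add_mem _ ihx ihy
    | smul a x hx ihx => rw [lie_smul]; exact Submodule.smul_mem _ _ ihx
  -- elements of G 1 commute with all Xb j, j ≥ 1
  have hlieG1 : ∀ (x : g), x ∈ G 1 → ∀ (j : Fin l), 1 ≤ (j : ℕ) → ⁅x, Xb j⁆ = 0 := by
    intro x hx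
    simp only [hGdef] at hx
    induction hx using Submodule.span_induction with
    | mem z hz =>
      obtain ⟨i, hik, rfl⟩ := hz
      intro j hj
      exact hab i j hik hj
    | zero => intro j hj; rw [zero_lie]
    | add x y hx hy ihx ihy => intro j hj; rw [add_lie, ihx j hj, ihy j hj, add_zero]
    | smul a x hx ihx => intro j hj; rw [smul_lie, ihx j hj, smul_zero]
  -- decomposition of an element of G m as a multiple of Xb m plus an element of G (m+1)
  have hdec : ∀ (m : ℕ) (hm : m < l) (x : g), x ∈ G m →
      ∃ t : ℝ, x - t • Xb ⟨m, hm⟩ ∈ G (m + 1) := by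
    intro m hm x hx
    have hsets : {i : Fin l | m ≤ (i : ℕ)}
        = insert (⟨m, hm⟩ : Fin l) {i : Fin l | m + 1 ≤ (i : ℕ)} := by
      ext i
      show m ≤ (i : ℕ) ↔ i ∈ insert (⟨m, hm⟩ : Fin l) {i : Fin l | m + 1 ≤ (i : ℕ)}
      rw [Set.mem_insert_iff]
      constructor
      · intro h
        rcases eq_or_lt_of_le h with h' | h'
        · exact Or.inl (Fin.ext h'.symm)
        · exact Or.inr h'
      · rintro (rfl | h)
        · exact le_rfl
        · exact Nat.le_of_succ_le h
    have hins : Xb '' {i : Fin l | m ≤ (i : ℕ)}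
        = insert (Xb ⟨m, hm⟩) (Xb '' {i : Fin l | m + 1 ≤ (i : ℕ)}) := by
      rw [hsets, Set.image_insert_eq]
    simp only [hGdef] at hx
    rw [hins, Submodule.span_insert] at hx
    rcases Submodule.mem_sup.mp hx with ⟨a, ha, b, hb, rfl⟩
    rcases Submodule.mem_span_singleton.mp ha with ⟨t, rfl⟩
    refine ⟨t, ?_⟩
    have : t • Xb ⟨m, hm⟩ + b - t • Xb ⟨m, hm⟩ = b := by abel
    rw [this]
    simp only [hGdef]
    exact hb
  -- the Leibniz recursion
  have hrec : ∀ (y : g) (j : ℕ) (h1 : 1 ≤ j) (hj1 : j + 1 < l),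
      ⁅y, Xb ⟨j + 1, hj1⟩⁆ =
        ⁅⁅y, Xb ⟨0, h0l⟩⁆, Xb ⟨j, by omega⟩⁆ + ⁅Xb ⟨0, h0l⟩, ⁅y, Xb ⟨j, by omega⟩⁆⁆ := by
    intro y j h1 hj1
    have hb := hbr ⟨j, by omega⟩ (by simpa using hj1) (by simpa using h1)
    rw [← hb]
    exact leibniz_lie y (Xb ⟨0, h0l⟩) (Xb ⟨j, by omega⟩)
  have hd_n : ∀ (y : g) (i : Fin l), ⁅y, Xb i⁆ ∈ G 0 := by
    intro y i
    exact hNG _ (n.lie_mem (hXmem i))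
  have hbr0 : ∀ (y : g) (j : ℕ) (h1 : 1 ≤ j) (hj1 : j + 1 < l),
      ⁅⁅y, Xb ⟨0, h0l⟩⁆, Xb ⟨j, by omega⟩⁆ ∈ G (j + 1) := by
    intro y j h1 hj1
    obtain ⟨t, ht⟩ := hdec 0 h0l _ (hd_n y ⟨0, h0l⟩)
    have he : ⁅y, Xb ⟨0, h0l⟩⁆
        = t • Xb ⟨0, h0l⟩ + (⁅y, Xb ⟨0, h0l⟩⁆ - t • Xb ⟨0, h0l⟩) := by abel
    rw [he, add_lie, smul_lie, hbr ⟨j, by omega⟩ (by simpa using hj1) (by simpa using h1),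
      hlieG1 _ ht ⟨j, by omega⟩ (by simpa using h1), add_zero]
    exact Submodule.smul_mem _ t (hXbG ⟨j + 1, hj1⟩ (j + 1) le_rfl)
  -- triangularity: ⁅y, Xb m⁆ ∈ G m for every y
  have htriN : ∀ (y : g) (m : ℕ) (hm : m < l), ⁅y, Xb ⟨m, hm⟩⁆ ∈ G m := by
    intro y m
    induction m with
    | zero => intro hm; exact hd_n y _
    | succ m ih =>
      intro hm
      rcases Nat.eq_zero_or_pos m with rfl | hpos
      · -- the key case m = 1, uses l ≥ 4
        obtain ⟨s, hs⟩ := hdec 0 h0l ⁅y, Xb ⟨1, hm⟩⁆ (hd_n y _)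
        have hd2 : ⁅y, Xb ⟨2, h2l⟩⁆ ∈ G 1 := by
          rw [hrec y 1 le_rfl h2l]
          refine Submodule.add_mem _ ?_ ?_
          · exact hGmono (by omega) (hbr0 y 1 le_rfl h2l)
          · exact hlie0 0 _ (hd_n y _)
        have h120 : ⁅Xb ⟨1, hm⟩, ⁅y, Xb ⟨2, h2l⟩⁆⁆ = 0 := by
          rw [← lie_skew, hlieG1 _ hd2 ⟨1, hm⟩ le_rfl, neg_zero]
        have hyz : ⁅⁅y, Xb ⟨1, hm⟩⁆, Xb ⟨2, h2l⟩⁆ = 0 := by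
          have h0 : ⁅y, ⁅Xb ⟨1, hm⟩, Xb ⟨2, h2l⟩⁆⁆ = 0 := by
            rw [hab ⟨1, hm⟩ ⟨2, h2l⟩ le_rfl (by norm_num), lie_zero]
          have hlz := leibniz_lie y (Xb ⟨1, hm⟩) (Xb ⟨2, h2l⟩)
          rw [h120, add_zero] at hlz
          rw [← hlz]
          exact h0
        have he : ⁅y, Xb ⟨1, hm⟩⁆
            = s • Xb ⟨0, h0l⟩ + (⁅y, Xb ⟨1, hm⟩⁆ - s • Xb ⟨0, h0l⟩) := by abel
        have hs3 : s • Xb ⟨3, h3l⟩ = 0 := by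
          rw [he, add_lie, smul_lie, hbr ⟨2, h2l⟩ (by simpa using h3l) (by norm_num),
            hlieG1 _ hs ⟨2, h2l⟩ (by norm_num), add_zero] at hyz
          exact hyz
        have hs0 : s = 0 := by
          rcases smul_eq_zero.mp hs3 with h | h
          · exact h
          · exact absurd h (hindep.ne_zero ⟨3, h3l⟩)
        rw [hs0, zero_smul, sub_zero] at hs
        exact hs
      · rw [hrec y m hpos hm]
        refine Submodule.add_mem _ ?_ ?_
        · exact hbr0 y m hpos hm
        · exact hlie0 m _ (ih (by omega))
  have htri : ∀ (y : g) (i : Fin l), ⁅y, Xb i⁆ ∈ G (i : ℕ) := fun y i => htriN y i.1 i.2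
  -- the flag is invariant under every ad z
  have hinv : ∀ (z x : g) (k : ℕ), x ∈ G k → ⁅z, x⁆ ∈ G k := by
    intro z x k hx
    simp only [hGdef] at hx
    induction hx using Submodule.span_induction with
    | mem w hw =>
      obtain ⟨i, hik, rfl⟩ := hw
      exact hGmono hik (htri z i)
    | zero => rw [lie_zero]; exact Submodule.zero_mem _
    | add x y hx hy ihx ihy => rw [lie_add]; exact Submodule.add_mem _ ihx ihy
    | smul a x hx ihx => rw [lie_smul]; exact Submodule.smul_mem _ _ ihx
  -- strict triangularity for kernel elements
  have hker : ∀ (y : g), ⁅y, Xb ⟨0, h0l⟩⁆ ∈ G 1 → ⁅y, Xb ⟨1, h1l⟩⁆ ∈ G 2 →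
      ∀ (m : ℕ) (hm : m < l), ⁅y, Xb ⟨m, hm⟩⁆ ∈ G (m + 1) := by
    intro y hy0 hy1 m
    induction m with
    | zero => intro hm; exact hy0
    | succ m ih =>
      intro hm
      rcases Nat.eq_zero_or_pos m with rfl | hpos
      · exact hy1
      · rw [hrec y m hpos hm]
        refine Submodule.add_mem _ ?_ ?_
        · rw [hlieG1 _ hy0 ⟨m, by omega⟩ hpos]
          exact Submodule.zero_mem _
        · exact hlie0 (m + 1) _ (ih (by omega))
  -- brackets act strictly triangularly
  have hbracketlow : ∀ (z w : g) (i : Fin l), ⁅⁅z, w⁆, Xb i⁆ ∈ G ((i : ℕ) + 1) := by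
    intro z w i
    obtain ⟨tz, hz⟩ := hdec i.1 i.2 _ (htri z i)
    obtain ⟨tw, hw⟩ := hdec i.1 i.2 _ (htri w i)
    have hA : ∀ (a b : g) (ta tb : ℝ), ⁅a, Xb i⁆ - ta • Xb i ∈ G (i.1 + 1) →
        ⁅b, Xb i⁆ - tb • Xb i ∈ G (i.1 + 1) →
        ⁅a, ⁅b, Xb i⁆⁆ - (tb * ta) • Xb i ∈ G (i.1 + 1) := by
      intro a b ta tb ha hb
      have key : ⁅a, ⁅b, Xb i⁆⁆ - (tb * ta) • Xb i
          = tb • (⁅a, Xb i⁆ - ta • Xb i) + ⁅a, ⁅b, Xb i⁆ - tb • Xb i⁆ := by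
        rw [lie_sub, lie_smul, smul_sub, smul_smul]
        abel
      rw [key]
      exact Submodule.add_mem _ (Submodule.smul_mem _ _ ha) (hinv a _ _ hb)
    have e : ⁅⁅z, w⁆, Xb i⁆
        = (⁅z, ⁅w, Xb i⁆⁆ - (tw * tz) • Xb i) - (⁅w, ⁅z, Xb i⁆⁆ - (tw * tz) • Xb i) := by
      rw [lie_lie]
      abel
    rw [e]
    refine Submodule.sub_mem _ (hA z w tz tw hz hw) ?_
    rw [mul_comm]
    exact hA w z tw tz hw hz
  -- the linear map ψ recording the two diagonal entries
  set ψ : g →ₗ[ℝ] (g ⧸ G 1) × (g ⧸ G 2) :=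
    LinearMap.prod ((G 1).mkQ ∘ₗ (LieAlgebra.ad ℝ g (Xb ⟨0, h0l⟩) : g →ₗ[ℝ] g))
      ((G 2).mkQ ∘ₗ (LieAlgebra.ad ℝ g (Xb ⟨1, h1l⟩) : g →ₗ[ℝ] g)) with hψdef
  have hpsi : ∀ y : g, ψ y = ((G 1).mkQ ⁅Xb ⟨0, h0l⟩, y⁆, (G 2).mkQ ⁅Xb ⟨1, h1l⟩, y⁆) := by
    intro y; rfl
  have hker_iff : ∀ y : g, ψ y = 0 ↔ (⁅y, Xb ⟨0, h0l⟩⁆ ∈ G 1 ∧ ⁅y, Xb ⟨1, h1l⟩⁆ ∈ G 2) := by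
    intro y
    rw [hpsi y, Prod.ext_iff]
    simp only [Prod.fst_zero, Prod.snd_zero, Submodule.mkQ_apply, Submodule.Quotient.mk_eq_zero]
    rw [← lie_skew y (Xb ⟨0, h0l⟩), ← lie_skew y (Xb ⟨1, h1l⟩), neg_mem_iff, neg_mem_iff]
  have hbrK : ∀ z w : g, ψ ⁅z, w⁆ = 0 := by
    intro z w
    rw [hker_iff]
    exact ⟨hbracketlow z w ⟨0, h0l⟩, hbracketlow z w ⟨1, h1l⟩⟩
  -- the kernel of ψ as a Lie ideal
  set K : LieIdeal ℝ g :=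
    { toSubmodule := LinearMap.ker ψ
      lie_mem := fun {x m} _ => by
        show ⁅x, m⁆ ∈ LinearMap.ker ψ
        rw [LinearMap.mem_ker]
        exact hbrK x m } with hKdef
  have hKmem : ∀ y : g, y ∈ K ↔ ψ y = 0 := by
    intro y
    rw [hKdef]
    exact Iff.rfl
  -- any Lie ideal contained in K with derived algebra inside n is nilpotent, hence inside n
  have hM : ∀ I : LieIdeal ℝ g, I ≤ K → ⁅I, I⁆ ≤ n → I ≤ n := by
    intro I hIK hII
    refine hn.2 I ?_
    rw [LieAlgebra.isNilpotent_iff_forall (R := ℝ)]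
    intro x
    refine ⟨l + 1, ?_⟩
    ext z
    have hxK : ψ (x : g) = 0 := (hKmem _).1 (hIK x.2)
    have hx01 := (hker_iff _).1 hxK
    have hxadv : ∀ i : Fin l, ⁅(x : g), Xb i⁆ ∈ G ((i : ℕ) + 1) :=
      fun i => hker _ hx01.1 hx01.2 i.1 i.2
    have hstepx : ∀ (k : ℕ) (w : g), w ∈ G k → ⁅(x : g), w⁆ ∈ G (k + 1) := by
      intro k w hw
      simp only [hGdef] at hw
      induction hw using Submodule.span_induction with
      | mem w hw =>
        obtain ⟨i, hik, rfl⟩ := hw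
        exact hGmono (show k + 1 ≤ (i : ℕ) + 1 from Nat.succ_le_succ hik) (hxadv i)
      | zero => rw [lie_zero]; exact Submodule.zero_mem _
      | add u v hu hv ihu ihv => rw [lie_add]; exact Submodule.add_mem _ ihu ihv
      | smul a u hu ihu => rw [lie_smul]; exact Submodule.smul_mem _ _ ihu
    have h1 : ⁅(x : g), (z : g)⁆ ∈ G 0 :=
      hNG _ (hII (LieSubmodule.lie_mem_lie x.2 z.2))
    have hiter : ∀ k : ℕ, ((LieAlgebra.ad ℝ g (x : g)) ^ k) ⁅(x : g), (z : g)⁆ ∈ G k := by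
      intro k
      induction k with
      | zero => simpa using h1
      | succ k ihk =>
        rw [pow_succ']
        simp only [Module.End.mul_apply]
        rw [LieAlgebra.ad_apply]
        exact hstepx k _ ihk
    have hz0 : ((LieAlgebra.ad ℝ g (x : g)) ^ (l + 1)) (z : g) = 0 := by
      have he : ((LieAlgebra.ad ℝ g (x : g)) ^ (l + 1)) (z : g)
          = ((LieAlgebra.ad ℝ g (x : g)) ^ l) ⁅(x : g), (z : g)⁆ := by
        rw [pow_succ]
        simp only [Module.End.mul_apply]
        rw [LieAlgebra.ad_apply]
      rw [he]
      have := hiter l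
      rw [hGl] at this
      simpa using this
    have hcoe : ∀ (k : ℕ) (v : ↥I),
        (((LieAlgebra.ad ℝ ↥I x ^ k) v : ↥I) : g) = ((LieAlgebra.ad ℝ g (x : g)) ^ k) (v : g) := by
      intro k
      induction k with
      | zero => intro v; simp
      | succ k ihk =>
        intro v
        rw [pow_succ', pow_succ']
        simp only [Module.End.mul_apply]
        rw [LieAlgebra.ad_apply, LieAlgebra.ad_apply, ← ihk v]
        rfl
    simp only [LinearMap.zero_apply, ZeroMemClass.coe_zero]
    rw [hcoe]
    exact hz0
  -- derived series descends into n
  have hds1 : LieAlgebra.derivedSeries ℝ g 1 = ⁅(⊤ : LieIdeal ℝ g), (⊤ : LieIdeal ℝ g)⁆ := by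
    rw [LieAlgebra.derivedSeries_def, LieAlgebra.derivedSeriesOfIdeal_succ,
      LieAlgebra.derivedSeriesOfIdeal_zero]
  have hD1K : LieAlgebra.derivedSeries ℝ g 1 ≤ K := by
    rw [hds1, LieSubmodule.lie_le_iff]
    intro x _ m _
    exact (hKmem _).2 (hbrK x m)
  have hanti : ∀ {a b : ℕ}, a ≤ b →
      LieAlgebra.derivedSeries ℝ g b ≤ LieAlgebra.derivedSeries ℝ g a := by
    intro a b h
    rw [LieAlgebra.derivedSeries_def, LieAlgebra.derivedSeries_def]
    exact LieAlgebra.derivedSeriesOfIdeal_antitone _ h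
  obtain ⟨k, hk⟩ := LieAlgebra.IsSolvable.solvable ℝ g
  have hsucc : ∀ j : ℕ, LieAlgebra.derivedSeries ℝ g (j + 1)
      = ⁅LieAlgebra.derivedSeries ℝ g j, LieAlgebra.derivedSeries ℝ g j⁆ := by
    intro j
    rw [LieAlgebra.derivedSeries_def, LieAlgebra.derivedSeriesOfIdeal_succ,
      LieAlgebra.derivedSeries_def]
  have hind : ∀ m : ℕ, m ≤ k → LieAlgebra.derivedSeries ℝ g (k + 1 - m) ≤ n := by
    intro m
    induction m with
    | zero =>
      intro _
      have h1 := hanti (Nat.le_succ k)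
      rw [hk] at h1
      exact le_trans h1 bot_le
    | succ m ih =>
      intro hm
      have hj : k + 1 - (m + 1) = k - m := by omega
      rw [hj]
      refine hM _ (le_trans (hanti (show 1 ≤ k - m by omega)) hD1K) ?_
      rw [← hsucc (k - m), show k - m + 1 = k + 1 - m by omega]
      exact ih (by omega)
  have hD1n : LieAlgebra.derivedSeries ℝ g 1 ≤ n := by
    have := hind k le_rfl
    rwa [show k + 1 - k = 1 by omega] at this
  have hKn : K ≤ n := by
    refine hM K le_rfl ?_
    refine le_trans ?_ hD1n
    rw [hds1]
    exact LieSubmodule.mono_lie le_top le_top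
  -- counting dimensions
  have hNfin : Module.finrank ℝ (Submodule.span ℝ (Set.range Xb)) = l := by
    rw [Module.finrank_eq_card_basis (Module.Basis.span hindep)]
    simp
  have hkerle : LinearMap.ker ψ ≤ Submodule.span ℝ (Set.range Xb) := by
    intro y hy
    have hyK : y ∈ K := (hKmem y).2 (LinearMap.mem_ker.mp hy)
    exact (hspan y).1 (hKn hyK)
  have hker_rank : Module.finrank ℝ (LinearMap.ker ψ) ≤ l := by
    rw [← hNfin]
    exact Submodule.finrank_mono hkerle
  set a : (g ⧸ G 1) × (g ⧸ G 2) := ((G 1).mkQ (Xb ⟨0, h0l⟩), 0) with hadef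
  set b : (g ⧸ G 1) × (g ⧸ G 2) := (0, (G 2).mkQ (Xb ⟨1, h1l⟩)) with hbdef
  have hrange : LinearMap.range ψ ≤ Submodule.span ℝ {a, b} := by
    rintro - ⟨y, rfl⟩
    have hm0 : ⁅Xb ⟨0, h0l⟩, y⁆ ∈ G 0 := by
      rw [← lie_skew]
      exact Submodule.neg_mem _ (hd_n y _)
    have hm1 : ⁅Xb ⟨1, h1l⟩, y⁆ ∈ G 1 := by
      rw [← lie_skew]
      exact Submodule.neg_mem _ (htri y ⟨1, h1l⟩)
    obtain ⟨t0, ht0⟩ := hdec 0 h0l _ hm0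
    obtain ⟨t1, ht1⟩ := hdec 1 h1l _ hm1
    have e0 : (G 1).mkQ ⁅Xb ⟨0, h0l⟩, y⁆ = t0 • (G 1).mkQ (Xb ⟨0, h0l⟩) := by
      rw [← map_smul]
      exact (Submodule.Quotient.eq _).mpr ht0
    have e1 : (G 2).mkQ ⁅Xb ⟨1, h1l⟩, y⁆ = t1 • (G 2).mkQ (Xb ⟨1, h1l⟩) := by
      rw [← map_smul]
      exact (Submodule.Quotient.eq _).mpr ht1
    have : ψ y = t0 • a + t1 • b := by
      rw [hpsi y, e0, e1, hadef, hbdef]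
      simp [Prod.ext_iff]
    rw [this]
    exact Submodule.add_mem _
      (Submodule.smul_mem _ _ (Submodule.subset_span (by simp)))
      (Submodule.smul_mem _ _ (Submodule.subset_span (by simp)))
  have hrange_rank : Module.finrank ℝ (LinearMap.range ψ) ≤ 2 := by
    have hfinab : FiniteDimensional ℝ (Submodule.span ℝ ({a, b} : Set _)) :=
      FiniteDimensional.span_of_finite _ ((Set.finite_singleton b).insert a)
    refine le_trans (Submodule.finrank_mono hrange) ?_
    haveI := ((Set.finite_singleton b).insert a).fintype
    refine le_trans (finrank_span_le_card _) ?_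
    simp only [Set.toFinset_insert, Set.toFinset_singleton]
    exact le_trans (Finset.card_insert_le _ _) (by simp)
  have hrn := LinearMap.finrank_range_add_finrank_ker ψ
  omega
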